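/- Define the vector field V on the Weil–Petersson universal Teichmüller space T₀(1) by V_{[μ]} = −4·(𝒮(g_μ))̄/ρ_{𝔻*}, where g_μ : 𝔻* → Ω*_μ is the conformal map associated with [μ]. Then V is the negative Weil–Petersson gradient of the universal Liouville action 𝐒: for every harmonic Beltrami differential ν̇ ∈ H^{−1,1}(𝔻*) ≅ T_{[μ]}T₀(1), (d𝐒)_{[μ]}(ν̇) = 4 Re ∫_{𝔻*} ν̇ 𝒮(g_μ) d²z = −⟨V_{[μ]}, ν̇⟩_WP, and moreover d𝐒(V) = −‖V‖²_WP ≤ 0. -/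

import Mathlib

open Complex Metric Set MeasureTheory Filter

/-- The exterior of the closed unit disk in `ℂ` (the finite part of `𝔻*`). -/
def extDisk : Set ℂ := {z : ℂ | 1 < ‖z‖}

/-- The Schwarzian derivative `𝒮(f) = f'''/f' - (3/2)(f''/f')²`. -/
noncomputable def schwarzian (f : ℂ → ℂ) (z : ℂ) : ℂ :=
  deriv (deriv (deriv f)) z / deriv f z - (3 / 2) * (deriv (deriv f) z / deriv f z) ^ 2

/-- `ν` is a harmonic Beltrami differential of Weil–Petersson class on `𝔻*`:
`ν = ρ_{𝔻*}⁻¹ φ̄` with `φ ∈ A₂(𝔻*)`, where `ρ_{𝔻*}(z) = 4/(|z|²-1)²`. -/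
def IsHarmonicBeltramiL2 (ν : ℂ → ℂ) : Prop :=
  ∃ φ : ℂ → ℂ, DifferentiableOn ℂ φ extDisk ∧
    MeasureTheory.IntegrableOn (fun z => ‖φ z‖ ^ 2 * ((‖z‖ ^ 2 - 1) ^ 2 / 4)) extDisk ∧
    ∀ z ∈ extDisk, ν z = (((‖z‖ ^ 2 - 1) ^ 2 / 4 : ℝ) : ℂ) * (starRingEnd ℂ) (φ z)

open scoped Topology

/-- An injective holomorphic function on an open set has nonvanishing derivative. -/
lemma deriv_ne_zero_of_injOn {U : Set ℂ} (hU : IsOpen U) {g : ℂ → ℂ}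
    (hg : DifferentiableOn ℂ g U) (hinj : InjOn g U) {z₀ : ℂ} (hz₀ : z₀ ∈ U) :
    deriv g z₀ ≠ 0 := by
  have hA : AnalyticOnNhd ℂ g U := hg.analyticOnNhd hU
  -- local openness at every point of U
  have hopen : ∀ z ∈ U, 𝓝 (g z) ≤ Filter.map g (𝓝 z) := by
    intro z hz
    rcases (hA z hz).eventually_constant_or_nhds_le_map_nhds with hc | ho
    · exfalso
      have h1 : ∀ᶠ w in 𝓝[≠] z, (g w = g z ∧ w ∈ U) ∧ w ≠ z :=
        ((hc.and (hU.eventually_mem hz)).filter_mono nhdsWithin_le_nhds).and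
          eventually_mem_nhdsWithin
      obtain ⟨w, ⟨hgw, hwU⟩, hne⟩ := h1.exists
      exact hne (hinj hwU hz hgw)
    · exact ho
  intro h0
  -- the function h is a left inverse of g on U
  set h : ℂ → ℂ := Function.invFunOn g U with hh
  have hleft : ∀ x ∈ U, h (g x) = x := fun x hx => hinj.leftInvOn_invFunOn hx
  -- derivative of g is analytic and not eventually zero near z₀
  have hdA : AnalyticOnNhd ℂ (deriv g) U := hA.deriv
  have hne : ∀ᶠ z in 𝓝[≠] z₀, deriv g z ≠ 0 := by
    rcases (hdA z₀ hz₀).eventually_eq_zero_or_eventually_ne_zero with hzz | h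
    · -- deriv g ≡ 0 near z₀ ⇒ g locally constant ⇒ contradicts injectivity
      exfalso
      obtain ⟨r, hr, hball⟩ := Metric.eventually_nhds_iff_ball.mp
        (hzz.and (hU.eventually_mem hz₀))
      have hconst : ∀ x ∈ ball z₀ r, g x = g z₀ := by
        have hdiff : DifferentiableOn ℂ g (ball z₀ r) :=
          hg.mono fun x hx => (hball x hx).2
        intro x hx
        refine Convex.is_const_of_fderivWithin_eq_zero (convex_ball z₀ r) hdiff ?_ hx
          (mem_ball_self hr)
        intro y hy
        have hdy : DifferentiableAt ℂ g y :=
          (hA y (hball y hy).2).differentiableAt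
        have h0y : HasDerivAt g 0 y := by
          simpa [(hball y hy).1] using hdy.hasDerivAt
        rw [fderivWithin_of_isOpen isOpen_ball hy, h0y.hasFDerivAt.fderiv]
        ext t
        simp
      set x : ℂ := z₀ + (r / 2 : ℝ) with hx
      have hxb : x ∈ ball z₀ r := by
        simp only [hx, mem_ball, dist_eq_norm, add_sub_cancel_left]
        rw [Complex.norm_real, Real.norm_eq_abs, abs_of_pos (by linarith)]
        linarith
      have hxne : x ≠ z₀ := by
        simp only [hx, ne_eq, add_eq_left]
        exact_mod_cast (by linarith : r / 2 ≠ 0)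
      exact hxne (hinj (hball x hxb).2 hz₀ (hconst x hxb))
    · exact h
  have h2 : ∀ᶠ z in 𝓝 z₀, (z ≠ z₀ → deriv g z ≠ 0) ∧ z ∈ U := by
    refine Filter.Eventually.and ?_ (hU.eventually_mem hz₀)
    simpa using eventually_nhdsWithin_iff.mp hne
  obtain ⟨r, hr, hball⟩ := Metric.eventually_nhds_iff_ball.mp h2
  -- h is differentiable at g z whenever deriv g z ≠ 0
  have hdiffh : ∀ z ∈ U, deriv g z ≠ 0 → DifferentiableAt ℂ h (g z) := by
    intro z hz hdz
    obtain ⟨p, hp⟩ := hA z hz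
    have hst : HasStrictDerivAt g (deriv g z) z := by
      have h3 := hp.hasStrictDerivAt
      rw [h3.hasDerivAt.deriv]
      exact h3
    have hlev : ∀ᶠ x in 𝓝 z, h (g x) = x :=
      (hU.eventually_mem hz).mono fun x hx => hleft x hx
    exact (HasStrictDerivAt.hasDerivAt (hst.to_local_left_inverse hdz hlev)).differentiableAt
  -- h is continuous at g z₀
  have hcont : ContinuousAt h (g z₀) := by
    rw [ContinuousAt, hleft z₀ hz₀]
    intro s hs
    rw [mem_map]
    have hsU : s ∩ U ∈ 𝓝 z₀ := Filter.inter_mem hs (hU.mem_nhds hz₀)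
    refine Filter.mem_of_superset (hopen z₀ hz₀ (Filter.image_mem_map hsU)) ?_
    rintro w ⟨x, ⟨hxs, hxU⟩, rfl⟩
    simpa [hleft x hxU] using hxs
  -- h is differentiable on a punctured neighborhood of g z₀
  have hpunct : ∀ᶠ w in 𝓝[≠] (g z₀), DifferentiableAt ℂ h w := by
    have himg : g '' ball z₀ r ∈ 𝓝 (g z₀) :=
      hopen z₀ hz₀ (Filter.image_mem_map (ball_mem_nhds z₀ hr))
    rw [eventually_nhdsWithin_iff]
    filter_upwards [himg] with w hw hwne
    obtain ⟨x, hxball, rfl⟩ := hw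
    have hxne : x ≠ z₀ := fun e => hwne (by rw [e]; rfl)
    exact hdiffh x (hball x hxball).2 ((hball x hxball).1 hxne)
  have hAh : AnalyticAt ℂ h (g z₀) :=
    Complex.analyticAt_of_differentiable_on_punctured_nhds_of_continuousAt hpunct hcont
  have hdg : DifferentiableAt ℂ g z₀ := (hA z₀ hz₀).differentiableAt
  have hcomp : deriv (h ∘ g) z₀ = deriv h (g z₀) * deriv g z₀ :=
    deriv_comp z₀ hAh.differentiableAt hdg
  have hid : (h ∘ g) =ᶠ[𝓝 z₀] id :=
    (hU.eventually_mem hz₀).mono fun x hx => hleft x hx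
  have hfin : (1 : ℂ) = 0 := by
    calc (1 : ℂ) = deriv (h ∘ g) z₀ := by rw [hid.deriv_eq]; simp
      _ = deriv h (g z₀) * deriv g z₀ := hcomp
      _ = 0 := by rw [h0, mul_zero]
  exact one_ne_zero hfin

/-- The exterior disk is open. -/
lemma isOpen_extDisk' : IsOpen extDisk :=
  isOpen_lt continuous_const continuous_norm

/-- The vector field `V_{[μ]} = -4 conj(𝒮(g_μ))/ρ_{𝔻*}` is the negative Weil–Petersson
gradient of the universal Liouville action: given the Takhtajan–Teo first variation
formula `(d𝐒)(ν̇) = 4 Re ∫_{𝔻*} ν̇ 𝒮(g_μ) d²z`, one has `(d𝐒)(ν̇) = -⟨V, ν̇⟩_WP` for every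
harmonic Beltrami differential `ν̇ ∈ H^{-1,1}(𝔻*)`, and `d𝐒(V) = -‖V‖²_WP ≤ 0`. -/
theorem liouville_action_gradient
    (g : ℂ → ℂ)
    (hg : DifferentiableOn ℂ g extDisk)
    (hginj : InjOn g extDisk)
    (hWP : IntegrableOn (fun z => ‖schwarzian g z‖ ^ 2 * ((‖z‖ ^ 2 - 1) ^ 2 / 4)) extDisk)
    (dS : (ℂ → ℂ) → ℝ)
    (hdS : ∀ ν : ℂ → ℂ, IsHarmonicBeltramiL2 ν →
      dS ν = 4 * (∫ z in extDisk, ν z * schwarzian g z).re)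
    (V : ℂ → ℂ)
    (hV : ∀ z : ℂ, V z =
      -4 * (starRingEnd ℂ) (schwarzian g z) * (((‖z‖ ^ 2 - 1) ^ 2 / 4 : ℝ) : ℂ)) :
    (∀ ν : ℂ → ℂ, IsHarmonicBeltramiL2 ν →
      dS ν =
        -(∫ z in extDisk, ν z * (starRingEnd ℂ) (V z) *
            (((4 / (‖z‖ ^ 2 - 1) ^ 2 : ℝ)) : ℂ)).re) ∧
    dS V = -∫ z in extDisk, ‖V z‖ ^ 2 * (4 / (‖z‖ ^ 2 - 1) ^ 2) ∧
    dS V ≤ 0 := by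
  have hext : IsOpen extDisk := isOpen_extDisk'
  have hmeas : MeasurableSet extDisk := hext.measurableSet
  have ht : ∀ z ∈ extDisk, ((‖z‖ ^ 2 - 1 : ℝ)) ≠ 0 := by
    intro z hz
    have : (1 : ℝ) < ‖z‖ := hz
    nlinarith
  -- Part 1
  have part1 : ∀ ν : ℂ → ℂ, IsHarmonicBeltramiL2 ν →
      dS ν = -(∫ z in extDisk, ν z * (starRingEnd ℂ) (V z) *
            (((4 / (‖z‖ ^ 2 - 1) ^ 2 : ℝ)) : ℂ)).re := by
    intro ν hν
    have hpt : EqOn (fun z => ν z * (starRingEnd ℂ) (V z) *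
        (((4 / (‖z‖ ^ 2 - 1) ^ 2 : ℝ)) : ℂ))
        (fun z => (-4 : ℂ) * (ν z * schwarzian g z)) extDisk := by
      intro z hz
      have htz := ht z hz
      have key : ((((‖z‖ ^ 2 - 1) ^ 2 / 4 : ℝ)) : ℂ) *
          (((4 / (‖z‖ ^ 2 - 1) ^ 2 : ℝ)) : ℂ) = 1 := by
        have hk : ((‖z‖ ^ 2 - 1) ^ 2 / 4) * (4 / (‖z‖ ^ 2 - 1) ^ 2) = (1 : ℝ) := by
          rw [div_mul_div_comm, mul_comm ((‖z‖ ^ 2 - 1) ^ 2) (4 : ℝ)]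
          exact div_self (mul_ne_zero four_ne_zero (pow_ne_zero 2 htz))
        rw [← Complex.ofReal_mul, hk, Complex.ofReal_one]
      simp only [hV z, map_mul, map_neg, map_ofNat, Complex.conj_conj, Complex.conj_ofReal]
      linear_combination (-4 * ν z * schwarzian g z) * key
    rw [hdS ν hν, MeasureTheory.setIntegral_congr_fun hmeas hpt,
      MeasureTheory.integral_const_mul]
    rw [show ((-4 : ℂ)) = ((-4 : ℝ) : ℂ) by norm_num, Complex.re_ofReal_mul]
    ring
  -- function V is a harmonic Beltrami differential
  have hA : AnalyticOnNhd ℂ g extDisk := hg.analyticOnNhd hext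
  have hne : ∀ z ∈ extDisk, deriv g z ≠ 0 := fun z hz =>
    deriv_ne_zero_of_injOn hext hg hginj hz
  have hs : DifferentiableOn ℂ (schwarzian g) extDisk := by
    have d1 : AnalyticOnNhd ℂ (deriv g) extDisk := hA.deriv
    have d2 : AnalyticOnNhd ℂ (deriv (deriv g)) extDisk := d1.deriv
    have d3 : AnalyticOnNhd ℂ (deriv (deriv (deriv g))) extDisk := d2.deriv
    unfold schwarzian
    exact (d3.differentiableOn.div d1.differentiableOn hne).sub
      ((differentiableOn_const _).mul
        ((d2.differentiableOn.div d1.differentiableOn hne).pow 2))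
  have hVHB : IsHarmonicBeltramiL2 V := by
    refine ⟨fun z => (-4 : ℂ) * schwarzian g z, (differentiableOn_const _).mul hs, ?_, ?_⟩
    · refine MeasureTheory.IntegrableOn.congr_fun (hWP.const_mul (16 : ℝ)) ?_ hmeas
      intro z _
      have h4 : ‖(-4 : ℂ)‖ = 4 := by norm_num
      simp only [norm_mul, h4]
      ring
    · intro z _
      rw [hV z]
      simp only [map_mul, map_neg, map_ofNat]
      ring
  -- Part 2
  have hpt2 : EqOn (fun z => V z * schwarzian g z)
      (fun z => (((-4 : ℝ) * (‖schwarzian g z‖ ^ 2 * ((‖z‖ ^ 2 - 1) ^ 2 / 4)) : ℝ) : ℂ))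
      extDisk := by
    intro z _
    have hcs : (starRingEnd ℂ) (schwarzian g z) * schwarzian g z =
        ((‖schwarzian g z‖ : ℂ)) ^ 2 := RCLike.conj_mul (schwarzian g z)
    simp only [hV z]
    push_cast
    linear_combination ((-4 : ℂ) * ((((‖z‖ : ℂ) ^ 2 - 1) ^ 2 / 4))) * hcs
  have hpt3 : EqOn (fun z => ‖V z‖ ^ 2 * (4 / (‖z‖ ^ 2 - 1) ^ 2))
      (fun z => (16 : ℝ) * (‖schwarzian g z‖ ^ 2 * ((‖z‖ ^ 2 - 1) ^ 2 / 4))) extDisk := by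
    intro z hz
    have htz := ht z hz
    have hnV : ‖V z‖ = 4 * ‖schwarzian g z‖ * ((‖z‖ ^ 2 - 1) ^ 2 / 4) := by
      rw [hV z]
      have h4 : ‖(-4 : ℂ)‖ = 4 := by norm_num
      simp only [norm_mul, Complex.norm_real, RCLike.norm_conj, Real.norm_eq_abs, h4]
      rw [_root_.abs_of_nonneg (by positivity : (0:ℝ) ≤ (‖z‖ ^ 2 - 1) ^ 2 / 4)]
    simp only [hnV]
    set t : ℝ := ‖z‖ ^ 2 - 1 with htdef
    set u : ℝ := ‖schwarzian g z‖ with hudef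
    field_simp
    ring
  have part2 : dS V = -∫ z in extDisk, ‖V z‖ ^ 2 * (4 / (‖z‖ ^ 2 - 1) ^ 2) := by
    have hoi : (∫ x in extDisk,
        (((-4 : ℝ) * (‖schwarzian g x‖ ^ 2 * ((‖x‖ ^ 2 - 1) ^ 2 / 4)) : ℝ) : ℂ)) =
        (((∫ x in extDisk,
          (-4 : ℝ) * (‖schwarzian g x‖ ^ 2 * ((‖x‖ ^ 2 - 1) ^ 2 / 4))) : ℝ) : ℂ) :=
      integral_ofReal
    rw [hdS V hVHB, MeasureTheory.setIntegral_congr_fun hmeas hpt2, hoi, Complex.ofReal_re,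
      MeasureTheory.setIntegral_congr_fun hmeas hpt3,
      MeasureTheory.integral_const_mul, MeasureTheory.integral_const_mul]
    ring
  refine ⟨part1, part2, ?_⟩
  rw [part2, neg_nonpos]
  exact MeasureTheory.setIntegral_nonneg hmeas fun z _ => by positivity
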